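/- Let X ⊆ ℝ^d be a measurable set, let T and H be measurable kernels on (0,∞) × X × X with values in [0,∞), and let Q be a cuboid in X with diameter d_Q such that |Q^{**}| ≤ C₃ d_Q^d. Assume: (i) |T_u(x,y) − H_u(x,y)| ≤ C₁ u^{−d/2} for all u > 0, x,y ∈ X; (ii) for some δ ∈ (0,1), sup_{y∈Q^*} ∫_{Q^{**}} sup_{0<u≤d_Q²} u^{−δ} |T_u(x,y) − H_u(x,y)| dx ≤ C₂ d_Q^{−2δ}; (iii) g : (0,∞) → [0,∞) is measurable with g(s) ≤ C₄ s⁻¹ for all s > 0. Define K_t(x,y) := ∫₀^∞ T_{ts}(x,y) g(s) ds and P_t(x,y) := ∫₀^∞ H_{ts}(x,y) g(s) ds. Then there is a constant C, depending only on d, δ, C₁, C₂, C₃, C₄, such that sup_{y∈Q^*} ∫_{Q^{**}} sup_{0<t≤d_Q²} |K_t(x,y) − P_t(x,y)| dx ≤ C. -/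

import Mathlib

open MeasureTheory Set Metric Filter
open scoped ENNReal NNReal

noncomputable section

/-- `ℝ^d` with the Euclidean structure and the Lebesgue measure. -/
abbrev Rd (d : ℕ) := EuclideanSpace ℝ (Fin d)

/-- The cuboid `Q(z, r₁, …, r_d)`, always taken as a subset of `X`. -/
def cuboid {d : ℕ} (X : Set (Rd d)) (z : Rd d) (r : Fin d → ℝ) : Set (Rd d) :=
  {x ∈ X | ∀ i, |x i - z i| ≤ r i}

/-- The `k`-fold enlargement `Q^{*⋯*}` of the cuboid, with enlargement parameter `κ`
(`k = 1` is `Q^*`, `k = 2` is `Q^{**}`, `k = 3` is `Q^{***}`). -/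
def cuboidSt {d : ℕ} (X : Set (Rd d)) (z : Rd d) (r : Fin d → ℝ) (κ : ℝ) (k : ℕ) :
    Set (Rd d) :=
  cuboid X z fun i => κ ^ k * r i

/-- The classical heat kernel `H_t(x,y) = (4πt)^{-d/2} exp(-|x-y|²/(4t))` on `ℝ^d`. -/
def heatK (d : ℕ) (t : ℝ) (x y : Rd d) : ℝ :=
  (4 * Real.pi * t) ^ (-(d : ℝ) / 2) * Real.exp (-dist x y ^ 2 / (4 * t))

set_option maxHeartbeats 1000000 in
/-- Subordination of the (A₂)-type estimate: if `|T_u − H_u| ≤ C₁ u^{−d/2}`,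
the kernels satisfy the quantified (A₂) estimate on a cuboid `Q` with `|Q^{**}| ≤ C₃ d_Q^d`,
and `g(s) ≤ C₄ s⁻¹`, then the subordinate kernels `K_t = ∫₀^∞ T_{ts} g(s) ds` and
`P_t = ∫₀^∞ H_{ts} g(s) ds` satisfy
`sup_{y∈Q^*} ∫_{Q^{**}} sup_{0<t≤d_Q²} |K_t − P_t| dx ≤ C`. -/
theorem stmt9 (d : ℕ) (δ C₁ C₂ C₃ C₄ κ : ℝ) (hδ : δ ∈ Set.Ioo (0 : ℝ) 1)
    (hC₁ : 0 < C₁) (hC₂ : 0 < C₂) (hC₃ : 0 < C₃) (hC₄ : 0 < C₄) (hκ : 1 < κ) :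
    ∃ C > 0,
      ∀ (X : Set (Rd d)), MeasurableSet X →
      ∀ T H : ℝ → Rd d → Rd d → ℝ,
        (Measurable fun p : ℝ × Rd d × Rd d => T p.1 p.2.1 p.2.2) →
        (Measurable fun p : ℝ × Rd d × Rd d => H p.1 p.2.1 p.2.2) →
        (∀ t x y, 0 ≤ T t x y) → (∀ t x y, 0 ≤ H t x y) →
      ∀ (z : Rd d) (r : Fin d → ℝ), (∀ i, 0 < r i) →
        -- |Q^{**}| ≤ C₃ d_Q^d
        volume (cuboidSt X z r κ 2) ≤ ENNReal.ofReal (C₃ * diam (cuboid X z r) ^ d) →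
        -- (i)
        (∀ u > 0, ∀ x ∈ X, ∀ y ∈ X, |T u x y - H u x y| ≤ C₁ * u ^ (-(d : ℝ) / 2)) →
        -- (ii)
        (∀ y ∈ cuboidSt X z r κ 1,
          (∫⁻ x in cuboidSt X z r κ 2,
              ⨆ (u : ℝ) (_ : 0 < u) (_ : u ≤ diam (cuboid X z r) ^ 2),
                ENNReal.ofReal (u ^ (-δ) * |T u x y - H u x y|))
            ≤ ENNReal.ofReal (C₂ * diam (cuboid X z r) ^ (-(2 * δ)))) →
      ∀ g : ℝ → ℝ, Measurable g → (∀ s, 0 ≤ g s) →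
        -- (iii)
        (∀ s > 0, g s ≤ C₄ / s) →
        (∀ t > 0, ∀ x ∈ X, ∀ y ∈ X,
          IntegrableOn (fun s => T (t * s) x y * g s) (Set.Ioi 0) volume) →
        (∀ t > 0, ∀ x ∈ X, ∀ y ∈ X,
          IntegrableOn (fun s => H (t * s) x y * g s) (Set.Ioi 0) volume) →
      ∀ K P : ℝ → Rd d → Rd d → ℝ,
        (∀ t x y, K t x y = ∫ s in Set.Ioi (0 : ℝ), T (t * s) x y * g s) →
        (∀ t x y, P t x y = ∫ s in Set.Ioi (0 : ℝ), H (t * s) x y * g s) →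
      ∀ y ∈ cuboidSt X z r κ 1,
        (∫⁻ x in cuboidSt X z r κ 2,
            ⨆ (t : ℝ) (_ : 0 < t) (_ : t ≤ diam (cuboid X z r) ^ 2),
              ENNReal.ofReal |K t x y - P t x y|)
          ≤ ENNReal.ofReal C := by
  obtain ⟨hδ0, hδ1⟩ := hδ
  refine ⟨C₂ * C₄ / δ + 2 * C₁ * C₃ * C₄ + 1, by positivity, ?_⟩
  intro X hX T H hTm hHm hT0 hH0 z r hrpos hvol hi hii g hgm hg0 hgle hTint hHint
    K P hK hP y hy
  set D := diam (cuboid X z r) with hDdef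
  have hD0 : 0 ≤ D := diam_nonneg
  rcases eq_or_lt_of_le hD0 with hD | hD
  · -- degenerate case: diameter zero, the sup over 0 < t ≤ 0 is empty
    have hz : ∀ x : Rd d,
        (⨆ (t : ℝ) (_ : 0 < t) (_ : t ≤ D ^ 2), ENNReal.ofReal |K t x y - P t x y|) = 0 := by
      intro x
      refine le_antisymm (iSup_le fun t => iSup_le fun ht => iSup_le fun htD => ?_) zero_le
      exact absurd (ht.trans_le htD) (by rw [← hD]; norm_num)
    simp only [hz, lintegral_zero]
    exact zero_le
  · -- main case
    have hy1 : y ∈ X := hy.1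
    -- d ≥ 1
    have hd1 : 1 ≤ d := by
      rcases Nat.eq_zero_or_pos d with rfl | h; swap; · exact h
      have hsub : Subsingleton (Rd 0) := ⟨fun a b => PiLp.ext fun i => i.elim0⟩
      exact absurd (Metric.diam_subsingleton Set.subsingleton_of_subsingleton).symm hD.ne
    have hdR : (0:ℝ) < d := by exact_mod_cast hd1
    have hd1R : (1:ℝ) ≤ d := by exact_mod_cast hd1
    have hDsq : (0:ℝ) < D ^ 2 := by positivity
    set c₁ := C₄ / δ * D ^ (2 * δ) with hc₁def
    set c₂ := 2 * C₁ * C₄ * D ^ (-(d:ℝ)) with hc₂def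
    have hc₁ : 0 < c₁ := by positivity
    have hc₂ : 0 < c₂ := by positivity
    set F : Rd d → ℝ≥0∞ := fun x =>
      ⨆ (u : ℝ) (_ : 0 < u) (_ : u ≤ D ^ 2),
        ENNReal.ofReal (u ^ (-δ) * |T u x y - H u x y|) with hFdef
    -- key pointwise estimate
    have key : ∀ x ∈ X, ∀ M : ℝ, 0 ≤ M →
        (∀ u, 0 < u → u ≤ D ^ 2 → u ^ (-δ) * |T u x y - H u x y| ≤ M) →
        ∀ t, 0 < t → t ≤ D ^ 2 → |K t x y - P t x y| ≤ c₁ * M + c₂ := by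
      intro x hx M hM0 hM t ht htD
      set a := D ^ 2 / t with hadef
      have ha : 0 < a := div_pos hDsq ht
      have hta : t * a = D ^ 2 := by rw [hadef]; field_simp
      have hφ := hTint t ht x hx y hy1
      have hψ := hHint t ht x hx y hy1
      set h : ℝ → ℝ := fun s => |T (t*s) x y * g s - H (t*s) x y * g s| with hhdef
      have hint : IntegrableOn h (Ioi 0) volume := (hφ.sub hψ).abs
      have heq : ∀ s : ℝ, h s = |T (t*s) x y - H (t*s) x y| * g s := by
        intro s; rw [hhdef]; dsimp only
        rw [← sub_mul, abs_mul, abs_of_nonneg (hg0 s)]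
      have habs : |K t x y - P t x y| ≤ ∫ s in Ioi (0:ℝ), h s := by
        rw [hK, hP, ← integral_sub hφ hψ]
        simpa [Real.norm_eq_abs, hhdef] using
          norm_integral_le_integral_norm
            (f := fun s => T (t*s) x y * g s - H (t*s) x y * g s)
            (μ := volume.restrict (Ioi 0))
      have hsplit : ∫ s in Ioi (0:ℝ), h s = (∫ s in Ioc 0 a, h s) + ∫ s in Ioi a, h s := by
        rw [← MeasureTheory.setIntegral_union (Set.Ioc_disjoint_Ioi le_rfl) measurableSet_Ioi
          (hint.mono_set Set.Ioc_subset_Ioi_self) (hint.mono_set (Set.Ioi_subset_Ioi ha.le)),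
          Set.Ioc_union_Ioi_eq_Ioi ha.le]
      -- near part
      have hb1 : ∫ s in Ioc (0:ℝ) a, h s ≤ c₁ * M := by
        have hpt : ∀ s ∈ Ioc (0:ℝ) a, h s ≤ M * C₄ * t ^ δ * s ^ (δ - 1) := by
          intro s hs
          obtain ⟨hs0, hsa⟩ := hs
          have hu : 0 < t * s := mul_pos ht hs0
          have huD : t * s ≤ D ^ 2 := by
            calc t * s ≤ t * a := by nlinarith
            _ = D ^ 2 := hta
          have h1 : |T (t*s) x y - H (t*s) x y| ≤ M * (t*s) ^ δ := by
            have h2 := hM (t*s) hu huD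
            have h3 : (t*s) ^ (-δ) * |T (t*s) x y - H (t*s) x y| * (t*s) ^ δ ≤ M * (t*s) ^ δ :=
              mul_le_mul_of_nonneg_right h2 (Real.rpow_nonneg hu.le δ)
            calc |T (t*s) x y - H (t*s) x y|
                = (t*s) ^ (-δ) * |T (t*s) x y - H (t*s) x y| * (t*s) ^ δ := by
                  rw [mul_comm ((t*s) ^ (-δ)) _, mul_assoc, ← Real.rpow_add hu, neg_add_cancel,
                    Real.rpow_zero, mul_one]
              _ ≤ M * (t*s) ^ δ := h3
          calc h s = |T (t*s) x y - H (t*s) x y| * g s := heq s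
            _ ≤ (M * (t*s) ^ δ) * (C₄ / s) := by
                exact mul_le_mul h1 (hgle s hs0) (hg0 s)
                  (mul_nonneg hM0 (Real.rpow_nonneg hu.le δ))
            _ = M * C₄ * t ^ δ * s ^ (δ - 1) := by
                rw [Real.mul_rpow ht.le hs0.le, Real.rpow_sub hs0, Real.rpow_one]
                field_simp
        have hintR : IntegrableOn (fun s : ℝ => M * C₄ * t ^ δ * s ^ (δ - 1)) (Ioc 0 a) volume :=
          ((intervalIntegral.intervalIntegrable_rpow' (by linarith)).1).const_mul _
        have hval : ∫ s in Ioc (0:ℝ) a, s ^ (δ - 1) = a ^ δ / δ := by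
          rw [← intervalIntegral.integral_of_le ha.le,
            integral_rpow (Or.inl (by linarith : (-1:ℝ) < δ - 1))]
          rw [sub_add_cancel, Real.zero_rpow hδ0.ne', sub_zero]
        have hpow : t ^ δ * a ^ δ = D ^ (2 * δ) := by
          rw [← Real.mul_rpow ht.le ha.le, hta, ← Real.rpow_natCast D 2,
            ← Real.rpow_mul hD0]
          norm_num
        calc ∫ s in Ioc (0:ℝ) a, h s
            ≤ ∫ s in Ioc (0:ℝ) a, M * C₄ * t ^ δ * s ^ (δ - 1) :=
              setIntegral_mono_on (hint.mono_set Set.Ioc_subset_Ioi_self) hintR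
                measurableSet_Ioc hpt
          _ = M * C₄ * t ^ δ * (a ^ δ / δ) := by
              rw [MeasureTheory.integral_const_mul, hval]
          _ = C₄ / δ * (t ^ δ * a ^ δ) * M := by field_simp
          _ = c₁ * M := by rw [hpow, hc₁def]
      -- far part
      have hb2 : ∫ s in Ioi a, h s ≤ c₂ := by
        set q : ℝ := -(d:ℝ) / 2 with hqdef
        have hq0 : q < 0 := by rw [hqdef]; exact div_neg_of_neg_of_pos (by linarith) two_pos
        have hq1 : q - 1 < -1 := by linarith
        have hpt : ∀ s ∈ Ioi a, h s ≤ C₁ * C₄ * t ^ q * s ^ (q - 1) := by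
          intro s hs
          have hs0 : 0 < s := ha.trans hs
          have hu : 0 < t * s := mul_pos ht hs0
          calc h s = |T (t*s) x y - H (t*s) x y| * g s := heq s
            _ ≤ (C₁ * (t*s) ^ q) * (C₄ / s) := by
                apply mul_le_mul (hi (t*s) hu x hx y hy1) (hgle s hs0) (hg0 s)
                positivity
            _ = C₁ * C₄ * t ^ q * s ^ (q - 1) := by
                rw [Real.mul_rpow ht.le hs0.le, Real.rpow_sub hs0, Real.rpow_one]
                field_simp
        have hintR : IntegrableOn (fun s : ℝ => C₁ * C₄ * t ^ q * s ^ (q - 1)) (Ioi a) volume :=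
          (integrableOn_Ioi_rpow_of_lt hq1 ha).const_mul _
        have hval : ∫ s in Ioi a, s ^ (q - 1) = a ^ q * (-q)⁻¹ := by
          rw [integral_Ioi_rpow_of_lt hq1 ha, sub_add_cancel, neg_div, ← div_neg,
            div_eq_mul_inv]
        have hpow : t ^ q * a ^ q = D ^ (-(d:ℝ)) := by
          rw [← Real.mul_rpow ht.le ha.le, hta, ← Real.rpow_natCast D 2,
            ← Real.rpow_mul hD0, hqdef]
          congr 1
          push_cast
          ring
        calc ∫ s in Ioi a, h s
            ≤ ∫ s in Ioi a, C₁ * C₄ * t ^ q * s ^ (q - 1) :=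
              setIntegral_mono_on (hint.mono_set (Set.Ioi_subset_Ioi ha.le)) hintR
                measurableSet_Ioi hpt
          _ = C₁ * C₄ * t ^ q * (a ^ q * (-q)⁻¹) := by
              rw [MeasureTheory.integral_const_mul, hval]
          _ = C₁ * C₄ * (t ^ q * a ^ q) * (2 / d) := by
              have hq2 : (-q)⁻¹ = 2 / (d:ℝ) := by
                rw [hqdef]; field_simp
              rw [hq2]; ring
          _ = C₁ * C₄ * D ^ (-(d:ℝ)) * (2 / d) := by rw [hpow]
          _ ≤ c₂ := by
              have h2d : 2 / (d:ℝ) ≤ 2 := by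
                rw [div_le_iff₀ hdR]; nlinarith
              rw [hc₂def]
              calc C₁ * C₄ * D ^ (-(d:ℝ)) * (2 / d)
                  ≤ C₁ * C₄ * D ^ (-(d:ℝ)) * 2 :=
                    mul_le_mul_of_nonneg_left h2d (by positivity)
                _ = 2 * C₁ * C₄ * D ^ (-(d:ℝ)) := by ring
      calc |K t x y - P t x y| ≤ ∫ s in Ioi (0:ℝ), h s := habs
        _ = (∫ s in Ioc 0 a, h s) + ∫ s in Ioi a, h s := hsplit
        _ ≤ c₁ * M + c₂ := add_le_add hb1 hb2
    -- measurability of Q^{**}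
    have hQ2 : MeasurableSet (cuboidSt X z r κ 2) := by
      have : cuboidSt X z r κ 2
          = X ∩ ⋂ i, {x : Rd d | |x i - z i| ≤ κ ^ 2 * r i} := by
        ext x; simp [cuboidSt, cuboid]
      rw [this]
      refine hX.inter (MeasurableSet.iInter fun i => ?_)
      exact (isClosed_le (((PiLp.continuous_apply 2 _ i).sub continuous_const).abs)
        continuous_const).measurableSet
    -- pointwise bound of the sup over t
    have hptw : ∀ x ∈ cuboidSt X z r κ 2,
        (⨆ (t : ℝ) (_ : 0 < t) (_ : t ≤ D ^ 2), ENNReal.ofReal |K t x y - P t x y|)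
          ≤ ENNReal.ofReal c₁ * F x + ENNReal.ofReal c₂ := by
      intro x hx
      by_cases hF : F x = ⊤
      · rw [hF, ENNReal.mul_top (by simp [ENNReal.ofReal_eq_zero]; linarith)]
        exact le_top
      · have hM0 : (0:ℝ) ≤ (F x).toReal := ENNReal.toReal_nonneg
        have hMb : ∀ u, 0 < u → u ≤ D ^ 2 →
            u ^ (-δ) * |T u x y - H u x y| ≤ (F x).toReal := by
          intro u hu huD
          have h1 : ENNReal.ofReal (u ^ (-δ) * |T u x y - H u x y|) ≤ F x := by
            rw [hFdef]
            exact le_iSup₂_of_le u hu (le_iSup_of_le huD le_rfl)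
          rw [← ENNReal.ofReal_toReal hF] at h1
          exact (ENNReal.ofReal_le_ofReal_iff hM0).mp h1
        refine iSup_le fun t => iSup_le fun ht => iSup_le fun htD => ?_
        calc ENNReal.ofReal |K t x y - P t x y|
            ≤ ENNReal.ofReal (c₁ * (F x).toReal + c₂) :=
              ENNReal.ofReal_le_ofReal (key x hx.1 _ hM0 hMb t ht htD)
          _ = ENNReal.ofReal c₁ * F x + ENNReal.ofReal c₂ := by
              rw [ENNReal.ofReal_add (by positivity) hc₂.le,
                ENNReal.ofReal_mul hc₁.le, ENNReal.ofReal_toReal hF]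
    -- put everything together
    calc (∫⁻ x in cuboidSt X z r κ 2,
            ⨆ (t : ℝ) (_ : 0 < t) (_ : t ≤ D ^ 2), ENNReal.ofReal |K t x y - P t x y|)
        ≤ ∫⁻ x in cuboidSt X z r κ 2, (ENNReal.ofReal c₁ * F x + ENNReal.ofReal c₂) :=
          lintegral_mono_ae (ae_restrict_of_forall_mem hQ2 hptw)
      _ = (∫⁻ x in cuboidSt X z r κ 2, ENNReal.ofReal c₁ * F x)
            + ENNReal.ofReal c₂ * volume (cuboidSt X z r κ 2) := by
          rw [lintegral_add_right _ measurable_const, setLIntegral_const]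
      _ = ENNReal.ofReal c₁ * (∫⁻ x in cuboidSt X z r κ 2, F x)
            + ENNReal.ofReal c₂ * volume (cuboidSt X z r κ 2) := by
          rw [lintegral_const_mul' _ _ ENNReal.ofReal_ne_top]
      _ ≤ ENNReal.ofReal c₁ * ENNReal.ofReal (C₂ * D ^ (-(2 * δ)))
            + ENNReal.ofReal c₂ * ENNReal.ofReal (C₃ * D ^ d) :=
          add_le_add (mul_le_mul_right (hii y hy) _) (mul_le_mul_right hvol _)
      _ ≤ ENNReal.ofReal (C₂ * C₄ / δ + 2 * C₁ * C₃ * C₄ + 1) := by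
          rw [← ENNReal.ofReal_mul hc₁.le, ← ENNReal.ofReal_mul hc₂.le,
            ← ENNReal.ofReal_add (by positivity) (by positivity)]
          apply ENNReal.ofReal_le_ofReal
          have e1 : D ^ (2 * δ) * D ^ (-(2 * δ)) = 1 := by
            rw [← Real.rpow_add hD]; simp
          have e2 : D ^ (-(d:ℝ)) * (D:ℝ) ^ (d:ℕ) = 1 := by
            rw [← Real.rpow_natCast D d, ← Real.rpow_add hD]; simp
          have : c₁ * (C₂ * D ^ (-(2 * δ))) + c₂ * (C₃ * D ^ d)
              = C₂ * C₄ / δ * (D ^ (2 * δ) * D ^ (-(2 * δ)))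
                + 2 * C₁ * C₃ * C₄ * (D ^ (-(d:ℝ)) * (D:ℝ) ^ (d:ℕ)) := by
            rw [hc₁def, hc₂def]; ring
          rw [this, e1, e2]
          nlinarith
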